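/- arXiv:2002.12608 — 13 statements merged into one kernel-verified Lean document; each statement's English description precedes it below -/
import Mathlib

section
/- If I is a weakly 1-absorbing primary ideal of a commutative ring R and √I is a maximal ideal of R, then I is a primary ideal of R. -/
open Ideal

def IsWeakly1AbsorbingPrimary {R : Type*} [CommRing R] (I : Ideal R) : Prop :=
  I ≠ ⊤ ∧ ∀ a b c : R, ¬IsUnit a → ¬IsUnit b → ¬IsUnit c →
    a * b * c ∈ I → a * b * c ≠ 0 → a * b ∈ I ∨ c ∈ I.radical

def IsWeaklyPrimary {R : Type*} [CommRing R] (I : Ideal R) : Prop :=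
  I ≠ ⊤ ∧ ∀ a b : R, a * b ∈ I → a * b ≠ 0 → a ∈ I ∨ b ∈ I.radical

def IsWeaklyPrime {R : Type*} [CommRing R] (I : Ideal R) : Prop :=
  I ≠ ⊤ ∧ ∀ a b : R, a * b ∈ I → a * b ≠ 0 → a ∈ I ∨ b ∈ I

theorem stmt3 {R : Type*} [CommRing R] [Nontrivial R] (I : Ideal R)
    (h : IsWeakly1AbsorbingPrimary I) (hm : I.radical.IsMaximal) :
    I.IsPrimary := by
  rw [Ideal.isPrimary_iff]
  refine ⟨h.1, ?_⟩
  intro a b hab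
  by_cases hb : b ∈ I.radical
  · exact Or.inr hb
  · left
    obtain ⟨y, i, hi, hyi⟩ := hm.exists_inv hb
    obtain ⟨t, hit⟩ := hi
    have h1 : (1 : R) - i ∣ 1 ^ t - i ^ t := sub_dvd_pow_sub_pow _ _ _
    have h2 : b ∣ (1 : R) - i := ⟨y, by rw [← hyi]; ring⟩
    have hdvd : b ∣ 1 - i ^ t := by simpa using h2.trans h1
    obtain ⟨c, hc⟩ := hdvd
    have : a = a * i ^ t + c * (a * b) := by linear_combination a * hc
    rw [this]
    exact I.add_mem (I.mul_mem_left a hit) (I.mul_mem_left c hab)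
end

section
/- If R is a reduced commutative ring and I is a nonzero weakly 1-absorbing primary ideal of R, then √I is a prime ideal of R. -/
open Ideal

theorem stmt4 {R : Type*} [CommRing R] [Nontrivial R] [IsReduced R] (I : Ideal R)
    (hne : I ≠ ⊥) (h : IsWeakly1AbsorbingPrimary I) : I.radical.IsPrime := by
  obtain ⟨hIt, hw⟩ := h
  obtain ⟨i, hiI, hi0⟩ := (Submodule.ne_bot_iff _).mp hne
  have hiu : ¬IsUnit i := fun hu => hIt (I.eq_top_of_isUnit_mem hiI hu)
  constructor
  · intro ht
    exact hIt (Ideal.radical_eq_top.mp ht)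
  intro x y hxy
  by_cases hx : IsUnit x
  · right
    have h1 : (↑hx.unit⁻¹ : R) * (x * y) ∈ I.radical := Ideal.mul_mem_left _ _ hxy
    rwa [← mul_assoc, IsUnit.val_inv_mul, one_mul] at h1
  by_cases hy : IsUnit y
  · left
    have h1 : (↑hy.unit⁻¹ : R) * (x * y) ∈ I.radical := Ideal.mul_mem_left _ _ hxy
    rwa [mul_comm x y, ← mul_assoc, IsUnit.val_inv_mul, one_mul] at h1
  by_cases hxy0 : x * y = 0
  · -- zero-product case
    by_cases hyi : IsUnit (y + i)
    · left
      apply Ideal.le_radical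
      have hx' : x = x * i * ↑hyi.unit⁻¹ := by
        have h2 : x * (y + i) * ↑hyi.unit⁻¹ = x := by
          rw [mul_assoc, IsUnit.mul_val_inv, mul_one]
        calc x = x * (y + i) * ↑hyi.unit⁻¹ := h2.symm
          _ = x * i * ↑hyi.unit⁻¹ := by
              rw [show x * (y + i) = x * y + x * i by ring, hxy0, zero_add]
      rw [hx']
      exact Ideal.mul_mem_right _ _ (Ideal.mul_mem_left _ _ hiI)
    by_cases hxi : IsUnit (x + i)
    · right
      apply Ideal.le_radical
      have hy' : y = y * i * ↑hxi.unit⁻¹ := by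
        have h2 : y * (x + i) * ↑hxi.unit⁻¹ = y := by
          rw [mul_assoc, IsUnit.mul_val_inv, mul_one]
        calc y = y * (x + i) * ↑hxi.unit⁻¹ := h2.symm
          _ = y * i * ↑hxi.unit⁻¹ := by
              rw [show y * (x + i) = y * x + y * i by ring,
                show y * x = x * y by ring, hxy0, zero_add]
      rw [hy']
      exact Ideal.mul_mem_right _ _ (Ideal.mul_mem_left _ _ hiI)
    by_cases hx2 : x * x * i = 0
    · by_cases hy2 : y * y * i = 0
      · -- both annihilate i up to squares; get x*i = 0 and y*i = 0
        have hxi0 : x * i = 0 := by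
          have : (x * i) ^ 2 = 0 := by
            rw [show (x * i) ^ 2 = (x * x * i) * i by ring, hx2, zero_mul]
          exact (IsNilpotent.eq_zero ⟨2, this⟩ : x * i = 0)
        have hyi0 : y * i = 0 := by
          have : (y * i) ^ 2 = 0 := by
            rw [show (y * i) ^ 2 = (y * y * i) * i by ring, hy2, zero_mul]
          exact (IsNilpotent.eq_zero ⟨2, this⟩ : y * i = 0)
        have hprod : (x + i) * (x + i) * (y + i) = i * i * i := by
          linear_combination x * hxy0 + (x + 2 * y + 2 * i) * hxi0 + i * hyi0
        have hnz : (x + i) * (x + i) * (y + i) ≠ 0 := by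
          rw [hprod]
          intro h0
          exact hi0 (IsNilpotent.eq_zero ⟨3, by rw [pow_succ, pow_two]; exact h0⟩)
        rcases hw (x + i) (x + i) (y + i) hxi hxi hyi
            (by rw [hprod]; exact Ideal.mul_mem_left _ _ hiI) hnz with h1 | h1
        · left
          refine ⟨2, ?_⟩
          have : x ^ 2 = (x + i) * (x + i) - (2 * x + i) * i := by
            ring
          rw [this]
          exact Ideal.sub_mem _ h1 (Ideal.mul_mem_left _ _ hiI)
        · right
          have : y = (y + i) - i := by ring
          rw [this]
          exact Ideal.sub_mem _ h1 (Ideal.le_radical hiI)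
      · -- y*y*i ≠ 0
        have hprod : y * y * (x + i) = y * y * i := by
          linear_combination y * hxy0
        rcases hw y y (x + i) hy hy hxi
            (by rw [hprod]; exact Ideal.mul_mem_left _ _ hiI)
            (by rw [hprod]; exact hy2) with h1 | h1
        · right; exact ⟨2, by rwa [pow_two]⟩
        · left
          have : x = (x + i) - i := by ring
          rw [this]
          exact Ideal.sub_mem _ h1 (Ideal.le_radical hiI)
    · -- x*x*i ≠ 0
      have hprod : x * x * (y + i) = x * x * i := by
        linear_combination x * hxy0
      rcases hw x x (y + i) hx hx hyi
          (by rw [hprod]; exact Ideal.mul_mem_left _ _ hiI)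
          (by rw [hprod]; exact hx2) with h1 | h1
      · left; exact ⟨2, by rwa [pow_two]⟩
      · right
        have : y = (y + i) - i := by ring
        rw [this]
        exact Ideal.sub_mem _ h1 (Ideal.le_radical hiI)
  · -- nonzero case
    obtain ⟨n, hn⟩ := hxy
    have hn2 : (x * y) ^ (n + 2) ∈ I := by
      rw [pow_add]; exact Ideal.mul_mem_right _ _ hn
    have hnz : ∀ a b : ℕ, x ^ a * y ^ b ≠ 0 := by
      intro a b h0
      apply hxy0
      refine IsNilpotent.eq_zero ⟨a + b, ?_⟩
      calc (x * y) ^ (a + b) = (x ^ a * y ^ b) * (x ^ b * y ^ a) := by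
            rw [mul_pow, pow_add, pow_add]; ring
        _ = 0 := by rw [h0, zero_mul]
    have hxpow : ¬IsUnit (x ^ (n + 1)) := fun hu => hx (((isUnit_pow_iff (Nat.succ_ne_zero _)).mp hu))
    have hxpow2 : ¬IsUnit (x ^ (n + 2)) := fun hu => hx (((isUnit_pow_iff (Nat.succ_ne_zero _)).mp hu))
    have key : ∀ k, x ^ (n + 2) * y ^ (k + 1) ∈ I → x ∈ I.radical ∨ y ∈ I.radical := by
      intro k
      induction k with
      | zero =>
        intro hk
        rcases hw x (x ^ (n + 1)) y hx hxpow hy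
            (by rw [show x * x ^ (n + 1) * y = x ^ (n + 2) * y ^ 1 by ring]; exact hk)
            (by rw [show x * x ^ (n + 1) * y = x ^ (n + 2) * y ^ 1 by ring]; exact hnz _ _)
            with h1 | h1
        · left
          exact ⟨n + 2, by rw [show x ^ (n + 2) = x * x ^ (n + 1) by ring]; exact h1⟩
        · right; exact h1
      | succ k ih =>
        intro hk
        have hypow : ¬IsUnit (y ^ (k + 1)) := fun hu => hy (((isUnit_pow_iff (Nat.succ_ne_zero _)).mp hu))
        rcases hw (x ^ (n + 2)) (y ^ (k + 1)) y hxpow2 hypow hy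
            (by rw [mul_assoc, ← pow_succ]; exact hk)
            (by rw [mul_assoc, ← pow_succ]; exact hnz _ _) with h1 | h1
        · exact ih h1
        · right; exact h1
    exact key (n + 1) (by rw [← mul_pow]; exact hn2)
end

section
/- Let R be a von Neumann regular commutative ring and I a nonzero proper ideal of R. Then I is a weakly 1-absorbing primary ideal of R if and only if I is a primary ideal of R. -/
open Ideal

theorem stmt5 {R : Type*} [CommRing R] [Nontrivial R]
    (hvn : ∀ x : R, ∃ y : R, x ^ 2 * y = x) (I : Ideal R)
    (hne : I ≠ ⊥) (hI : I ≠ ⊤) :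
    IsWeakly1AbsorbingPrimary I ↔ I.IsPrimary := by
  -- radical of I is I in a von Neumann regular ring
  have hrad : I.radical = I := by
    apply le_antisymm
    · intro x hx
      obtain ⟨n, hn⟩ := hx
      obtain ⟨y, hy⟩ := hvn x
      have hpow : ∀ m : ℕ, x * (x * y) ^ m = x := by
        intro m
        induction m with
        | zero => simp
        | succ m ih =>
          calc x * (x * y) ^ (m + 1) = (x ^ 2 * y) * (x * y) ^ m := by ring
            _ = x * (x * y) ^ m := by rw [hy]
            _ = x := ih
      rcases n with _ | n
      · exact absurd (I.eq_top_of_isUnit_mem (by simpa using hn) isUnit_one) hI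
      · have hxm : x = x ^ (n + 1) * (x * y ^ (n + 1)) := by
          calc x = x * (x * y) ^ (n + 1) := (hpow (n + 1)).symm
            _ = x ^ (n + 1) * (x * y ^ (n + 1)) := by ring
        rw [hxm]
        exact I.mul_mem_right _ hn
    · exact Ideal.le_radical
  constructor
  · rintro ⟨-, hw⟩
    rw [Ideal.isPrimary_iff]
    have key : ∀ a b : R, a * b ∈ I → a ∈ I ∨ b ∈ I := by
      intro a b hab
      by_cases hua : IsUnit a
      · obtain ⟨v, hav⟩ := isUnit_iff_exists_inv.mp hua
        right
        have hb : b = v * (a * b) := by linear_combination (-b) * hav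
        rw [hb]; exact I.mul_mem_left v hab
      by_cases hub : IsUnit b
      · obtain ⟨v, hbv⟩ := isUnit_iff_exists_inv.mp hub
        left
        have ha : a = v * (a * b) := by linear_combination (-a) * hbv
        rw [ha]; exact I.mul_mem_left v hab
      obtain ⟨y, hy⟩ := hvn a
      obtain ⟨z, hz⟩ := hvn b
      set e := a * y with he
      set f := b * z with hf
      have hae : a * e = a := by rw [he]; linear_combination hy
      have hbf : b * f = b := by rw [hf]; linear_combination hz
      have hee : e * e = e := by rw [he]; linear_combination y * hy
      have hff : f * f = f := by rw [hf]; linear_combination z * hz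
      have hue : ¬IsUnit e := fun h => hua (isUnit_of_mul_isUnit_left h)
      have huf : ¬IsUnit f := fun h => hub (isUnit_of_mul_isUnit_left h)
      by_cases h0 : a * b = 0
      · -- the zero-product case
        have hef : e * f = 0 := by
          rw [he, hf]
          calc a * y * (b * z) = (a * b) * (y * z) := by ring
            _ = 0 := by rw [h0, zero_mul]
        obtain ⟨x, hxI, hx0⟩ := Submodule.ne_bot_iff I |>.mp hne
        obtain ⟨w, hw'⟩ := hvn x
        set g := x * w with hg
        have hgI : g ∈ I := I.mul_mem_right w hxI
        have hgg : g * g = g := by rw [hg]; linear_combination w * hw'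
        have hxg : x * g = x := by rw [hg]; linear_combination hw'
        have hg0 : g ≠ 0 := fun h => hx0 (by rw [← hxg, h, mul_zero])
        by_cases hA : e * g * (1 - f) = 0
        · -- then e*g = 0
          have heg : e * g = 0 := by linear_combination hA + g * hef
          by_cases hB : f * g = 0
          · -- e, f, g pairwise orthogonal: use (e+g, e+g, f+g)
            set p := e + g with hp
            set q := f + g with hq
            have hpp : p * p = p := by rw [hp]; linear_combination hee + hgg + 2 * heg
            have hqq : q * q = q := by rw [hq]; linear_combination hff + hgg + 2 * hB
            by_cases hup : IsUnit p
            · -- p = 1 forces f = 0, so b = 0 ∈ I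
              have hp1 : p = 1 := hup.mul_left_cancel (by rw [hpp, mul_one])
              have hfz : f = 0 := by
                have : f = f * p := by rw [hp1, mul_one]
                rw [this, hp]; linear_combination hef + hB
              right
              rw [← hbf, hfz, mul_zero]; exact I.zero_mem
            by_cases huq : IsUnit q
            · have hq1 : q = 1 := huq.mul_left_cancel (by rw [hqq, mul_one])
              have hez : e = 0 := by
                have : e = e * q := by rw [hq1, mul_one]
                rw [this, hq]; linear_combination hef + heg
              left
              rw [← hae, hez, mul_zero]; exact I.zero_mem
            have hpq : p * q = g := by rw [hp, hq]; linear_combination hef + heg + hB + hgg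
            have hppq : p * p * q = g := by
              calc p * p * q = p * (p * q) := by ring
                _ = p * g := by rw [hpq]
                _ = g := by rw [hp]; linear_combination heg + hgg
            rcases hw p p q hup hup huq (by rw [hppq]; exact hgI)
                (by rw [hppq]; exact hg0) with h | h
            · left
              rw [hpp] at h
              have : e * p ∈ I := I.mul_mem_left e h
              have hep : e * p = e := by rw [hp]; linear_combination hee + heg
              rw [hep] at this
              rw [← hae]; exact I.mul_mem_left a this
            · right
              rw [hrad] at h
              have : f * q ∈ I := I.mul_mem_left f h
              have hfq : f * q = f := by rw [hq]; linear_combination hff + hB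
              rw [hfq] at this
              rw [← hbf]; exact I.mul_mem_left b this
          · -- f*g ≠ 0 : use (f, f, e+g)
            set s := e + g with hs
            have hss : s * s = s := by rw [hs]; linear_combination hee + hgg + 2 * heg
            by_cases hus : IsUnit s
            · have hs1 : s = 1 := hus.mul_left_cancel (by rw [hss, mul_one])
              right
              have hfs' : f * s = f * g := by rw [hs]; linear_combination hef
              have hfs : f = f * g := by rw [← hfs', hs1, mul_one]
              rw [← hbf]
              exact I.mul_mem_left b (by rw [hfs]; exact I.mul_mem_left f hgI)
            have hffs : f * f * s = f * g := by rw [hs]; linear_combination f * hef + g * hff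
            rcases hw f f s huf huf hus
                (by rw [hffs]; exact I.mul_mem_left f hgI)
                (by rw [hffs]; exact hB) with h | h
            · right
              rw [hff] at h
              rw [← hbf]; exact I.mul_mem_left b h
            · left
              rw [hrad] at h
              have : e * s ∈ I := I.mul_mem_left e h
              have hes : e * s = e := by rw [hs]; linear_combination hee + heg
              rw [hes] at this
              rw [← hae]; exact I.mul_mem_left a this
        · -- e*g*(1-f) ≠ 0 : use (e, e, f + g*(1-f))
          set t := f + g * (1 - f) with ht
          have htt : t * t = t := by
            rw [ht]; linear_combination (1 - g) * hff + (1 - f) ^ 2 * hgg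
          by_cases hut : IsUnit t
          · have ht1 : t = 1 := hut.mul_left_cancel (by rw [htt, mul_one])
            left
            have het : e * t = g * (e * (1 - f)) := by rw [ht]; linear_combination hef
            have : e = g * (e * (1 - f)) := by rw [← het, ht1, mul_one]
            rw [← hae]
            exact I.mul_mem_left a (by rw [this]; exact I.mul_mem_right _ hgI)
          have heet : e * e * t = g * (e * (1 - f)) := by
            rw [ht]; linear_combination (f + g * (1 - f)) * hee + hef
          have heet' : e * e * t = e * g * (1 - f) := by
            rw [heet]; ring
          rcases hw e e t hue hue hut
              (by rw [heet]; exact I.mul_mem_right _ hgI)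
              (by rw [heet']; exact hA) with h | h
          · left
            rw [hee] at h
            rw [← hae]; exact I.mul_mem_left a h
          · right
            rw [hrad] at h
            have : f * t ∈ I := I.mul_mem_left f h
            have hft : f * t = f := by rw [ht]; linear_combination (1 - g) * hff
            rw [hft] at this
            rw [← hbf]; exact I.mul_mem_left b this
      · -- a*b ≠ 0 : use (e, a, b)
        have heab : e * a * b = a * b := by linear_combination b * mul_comm e a + b * hae
        rcases hw e a b hue hua hub (by rw [heab]; exact hab) (by rw [heab]; exact h0) with h | h
        · left
          have : e * a = a := by rw [mul_comm]; exact hae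
          rwa [this] at h
        · right
          rwa [hrad] at h
    exact ⟨hI, fun {x y} h => (key x y h).imp_right fun hb => Ideal.le_radical hb⟩
  · intro hp
    obtain ⟨-, hp2⟩ := Ideal.isPrimary_iff.mp hp
    exact ⟨hI, fun a b c _ _ _ habc _ => hp2 habc⟩
end

section
/- Let R be a non-quasilocal commutative ring and I a proper ideal of R such that the annihilator ann(i) = {r ∈ R : ri = 0} is not a maximal ideal of R for every i ∈ I. Then I is a weakly 1-absorbing primary ideal of R if and only if I is a weakly primary ideal of R. -/
open Ideal

theorem stmt6 {R : Type*} [CommRing R] [Nontrivial R]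
    (hnql : ∃ M N : Ideal R, M.IsMaximal ∧ N.IsMaximal ∧ M ≠ N)
    (I : Ideal R) (hI : I ≠ ⊤)
    (hann : ∀ i ∈ I, ¬ (Ideal.torsionOf R R i).IsMaximal) :
    IsWeakly1AbsorbingPrimary I ↔ IsWeaklyPrimary I := by
  constructor
  · rintro ⟨hne, hw⟩
    refine ⟨hne, fun a b hab hab0 => ?_⟩
    by_cases ha : IsUnit a
    · right
      obtain ⟨u, rfl⟩ := ha
      have hb : b = (↑u⁻¹ : R) * ((u : R) * b) := by
        rw [← mul_assoc]; simp
      exact Ideal.le_radical (hb ▸ I.mul_mem_left _ hab)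
    by_cases hb : IsUnit b
    · left
      obtain ⟨u, rfl⟩ := hb
      have hA : a = a * (u : R) * (↑u⁻¹ : R) := by
        rw [mul_assoc]; simp
      exact hA ▸ I.mul_mem_right _ hab
    by_cases hbr : b ∈ I.radical
    · right; exact hbr
    left
    set A := Ideal.torsionOf R R (a * b) with hAdef
    have hAnm : ¬A.IsMaximal := hann _ hab
    have hAne : A ≠ ⊤ := by
      intro h
      exact hab0 ((Ideal.torsionOf_eq_top_iff (R := R) (a * b)).mp h)
    -- key: for every maximal ideal P, P * a ⊆ I
    have key : ∀ P : Ideal R, P.IsMaximal → ∀ m ∈ P, m * a ∈ I := by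
      intro P hP m hm
      -- first, get m₀ ∈ P \ A
      have hPA : ¬P ≤ A := by
        intro hle
        rcases (hP.eq_of_le hAne hle) with h
        exact hAnm (h ▸ hP)
      obtain ⟨m₀, hm₀P, hm₀A⟩ := Set.not_subset.mp hPA
      have step : ∀ x ∈ P, x ∉ A → x * a ∈ I := by
        intro x hxP hxA
        have hxnu : ¬IsUnit x := fun hu => hP.ne_top (P.eq_top_of_isUnit_mem hxP hu)
        have hmem : x * a * b ∈ I := by
          rw [mul_assoc]; exact I.mul_mem_left _ hab
        have hnz : x * a * b ≠ 0 := by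
          intro h
          apply hxA
          rw [hAdef, Ideal.mem_torsionOf_iff, smul_eq_mul, ← mul_assoc]
          exact h
        rcases hw x a b hxnu ha hb hmem hnz with h | h
        · exact h
        · exact absurd h hbr
      by_cases hmA : m ∈ A
      · have h1 : (m - m₀) ∈ P := P.sub_mem hm hm₀P
        have h2 : (m - m₀) ∉ A := fun h => hm₀A (by simpa using A.sub_mem hmA h)
        have := I.add_mem (step _ h1 h2) (step _ hm₀P hm₀A)
        simpa [sub_mul] using this
      · exact step m hm hmA
    obtain ⟨M, N, hM, hN, hMN⟩ := hnql
    have hsup : M ⊔ N = ⊤ := Ideal.IsMaximal.coprime_of_ne hM hN hMN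
    have h1 : (1 : R) ∈ M ⊔ N := hsup ▸ Submodule.mem_top
    obtain ⟨m, hmM, n, hnN, hmn⟩ := Submodule.mem_sup.mp h1
    have : a = m * a + n * a := by
      rw [← add_mul, hmn, one_mul]
    rw [this]
    exact I.add_mem (key M hM m hmM) (key N hN n hnN)
  · rintro ⟨hne, hw⟩
    refine ⟨hne, fun a b c _ _ _ habc habc0 => ?_⟩
    exact hw (a * b) c habc habc0
end

section
/- If I is a weakly 1-absorbing primary ideal of the polynomial ring R[X] over a commutative ring R, then I is a weakly primary ideal of R[X]. -/
open Ideal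

theorem stmt8 {R : Type*} [CommRing R] [Nontrivial R] (I : Ideal (Polynomial R))
    (h : IsWeakly1AbsorbingPrimary I) : IsWeaklyPrimary I := by
  obtain ⟨hI, h2⟩ := h
  refine ⟨hI, fun a b hab hne => ?_⟩
  by_cases ha : IsUnit a
  · right
    exact Ideal.le_radical ((I.unit_mul_mem_iff_mem ha).mp hab)
  by_cases hb : IsUnit b
  · left
    exact (I.mul_unit_mem_iff_mem hb).mp hab
  -- X and 1 + X are monic nonunits
  have hXmonic : (Polynomial.X : Polynomial R).Monic := Polynomial.monic_X
  have h1Xmonic : (1 + Polynomial.X : Polynomial R).Monic := by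
    simpa [add_comm] using (Polynomial.monic_X_add_C (1 : R))
  have hXnu : ¬IsUnit (Polynomial.X : Polynomial R) := Polynomial.not_isUnit_X
  have h1Xnu : ¬IsUnit (1 + Polynomial.X : Polynomial R) := by
    intro hu
    have := (Polynomial.isUnit_iff_coeff_isUnit_isNilpotent.mp hu).2 1 one_ne_zero
    simp only [Polynomial.coeff_add, Polynomial.coeff_X_one, Polynomial.coeff_one] at this
    obtain ⟨n, hn⟩ := this
    simp at hn
  have key : ∀ c : Polynomial R, c.Monic → ¬IsUnit c → c * a ∈ I ∨ b ∈ I.radical := by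
    intro c hcm hcu
    have hmem : c * a * b ∈ I := by
      rw [mul_assoc]; exact I.mul_mem_left c hab
    have hne' : c * a * b ≠ 0 := by
      rw [mul_assoc]; exact hcm.mul_right_ne_zero hne
    exact h2 c a b hcu ha hb hmem hne'
  rcases key _ h1Xmonic h1Xnu with h1 | h1
  · rcases key _ hXmonic hXnu with hX | hX
    · left
      have : a ∈ I := by
        have := I.sub_mem h1 hX
        simpa [add_mul, add_sub_cancel_right] using this
      exact this
    · right; exact hX
  · right; exact h1
end

section
/- Let R be a reduced divided commutative ring and I a proper ideal of R. Then I is a weakly 1-absorbing primary ideal of R if and only if I is a weakly primary ideal of R. -/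
open Ideal

theorem stmt9 {R : Type*} [CommRing R] [Nontrivial R] [IsReduced R]
    (hdiv : ∀ P : Ideal R, P.IsPrime → ∀ x ∉ P, ∀ p ∈ P, x ∣ p)
    (I : Ideal R) (hI : I ≠ ⊤) :
    IsWeakly1AbsorbingPrimary I ↔ IsWeaklyPrimary I := by
  -- First: a reduced divided ring is a domain (⊥ is prime).
  have hbot : (⊥ : Ideal R).IsPrime := by
    obtain ⟨M, hM⟩ := Ideal.exists_maximal R
    haveI := hM.isPrime
    obtain ⟨P, hPmin, _⟩ := Ideal.exists_minimalPrimes_le (bot_le : (⊥ : Ideal R) ≤ M)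
    have hPprime : P.IsPrime := hPmin.1.1
    have hPbot : P = ⊥ := by
      have hle : P ≤ (⊥ : Ideal R).radical := by
        rw [Ideal.radical_eq_sInf]
        refine le_sInf ?_
        rintro Q ⟨-, hQ⟩
        intro x hxP
        by_contra hxQ
        have hQP : Q ≤ P := by
          intro q hq
          obtain ⟨d, hd⟩ := hdiv Q hQ x hxQ q hq
          rw [hd]
          exact Ideal.mul_mem_right d P hxP
        exact hxQ (hPmin.2 ⟨hQ, bot_le⟩ hQP hxP)
      have : (⊥ : Ideal R).radical = ⊥ := by
        have := nilradical_eq_zero R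
        simpa [nilradical] using this
      exact le_antisymm (this ▸ hle) bot_le
    rwa [hPbot] at hPprime
  haveI : NoZeroDivisors R := by
    constructor
    intro x y h
    have : x * y ∈ (⊥ : Ideal R) := by simp [h]
    rcases hbot.mem_or_mem this with hx | hy
    · exact Or.inl (by simpa using hx)
    · exact Or.inr (by simpa using hy)
  constructor
  · rintro ⟨-, hW⟩
    refine ⟨hI, fun a b hab hne => ?_⟩
    have ha0 : a ≠ 0 := fun h => hne (by simp [h])
    have hb0 : b ≠ 0 := fun h => hne (by simp [h])
    by_cases hua : IsUnit a
    · right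
      obtain ⟨u, rfl⟩ := hua
      have : ((↑u⁻¹ : R) * (↑u * b) : R) ∈ I := Ideal.mul_mem_left I _ hab
      rw [Units.inv_mul_cancel_left] at this
      exact Ideal.le_radical this
    by_cases hub : IsUnit b
    · left
      obtain ⟨u, rfl⟩ := hub
      have : ((↑u⁻¹ : R) * (a * ↑u) : R) ∈ I := Ideal.mul_mem_left I _ hab
      have h2 : (a : R) = (↑u⁻¹ : R) * (a * ↑u) := by
        rw [mul_comm a (↑u : R), Units.inv_mul_cancel_left]
      rwa [← h2] at this
    by_contra hcon
    push_neg at hcon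
    obtain ⟨haI, hbI⟩ := hcon
    -- a * a * b ∈ I, nonzero
    have h1 : a * a * b ∈ I := by
      rw [mul_assoc]; exact Ideal.mul_mem_left I a hab
    have h1ne : a * a * b ≠ 0 := by
      rw [mul_assoc]; exact mul_ne_zero ha0 hne
    have haa : a * a ∈ I := by
      rcases hW a a b hua hua hub h1 h1ne with h | h
      · exact h
      · exact absurd h hbI
    have harad : a ∈ I.radical := ⟨2, by rwa [pow_two]⟩
    -- b ∉ rad I : find prime P ⊇ I with b ∉ P
    have : ∃ P : Ideal R, I ≤ P ∧ P.IsPrime ∧ b ∉ P := by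
      by_contra hc
      push_neg at hc
      apply hbI
      rw [Ideal.radical_eq_sInf]
      exact Submodule.mem_sInf.2 fun P ⟨h1, h2⟩ => hc P h1 h2
    obtain ⟨P, hIP, hPpr, hbP⟩ := this
    have haP : a ∈ P := by
      have : I.radical ≤ P := by
        rw [Ideal.radical_eq_sInf]; exact sInf_le ⟨hIP, hPpr⟩
      exact this harad
    obtain ⟨c, hc⟩ := hdiv P hPpr b hbP a haP
    have hcu : ¬IsUnit c := by
      intro hcu
      obtain ⟨u, rfl⟩ := hcu
      apply hbP
      have : b = a * (↑u⁻¹ : R) := by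
        rw [hc, mul_assoc, Units.mul_inv, mul_one]
      rw [this]
      exact Ideal.mul_mem_right _ P haP
    have h2 : c * b * b ∈ I := by
      have : c * b * b = a * b := by rw [hc]; ring
      rw [this]; exact hab
    have h2ne : c * b * b ≠ 0 := by
      have : c * b * b = a * b := by rw [hc]; ring
      rw [this]; exact hne
    rcases hW c b b hcu hub hub h2 h2ne with h | h
    · exact haI (by rwa [hc, mul_comm b c])
    · exact hbI h
  · rintro ⟨-, hW⟩
    refine ⟨hI, fun a b c _ _ _ habc hne => hW (a * b) c habc hne⟩
end

section
/- Let I be a weakly 1-absorbing primary ideal of a commutative ring R and (a, b, c) a 1-triple-zero of I. Then abI = 0, i.e., abx = 0 for every x ∈ I. -/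
open Ideal

theorem stmt10 {R : Type*} [CommRing R] [Nontrivial R] (I : Ideal R)
    (h : IsWeakly1AbsorbingPrimary I) (a b c : R)
    (ha : ¬IsUnit a) (hb : ¬IsUnit b) (hc : ¬IsUnit c)
    (habc : a * b * c = 0) (hab : a * b ∉ I) (hcr : c ∉ I.radical) :
    ∀ x ∈ I, a * b * x = 0 := by
  intro x hx
  by_contra hne
  have key : a * b * (c + x) = a * b * x := by rw [mul_add, habc, zero_add]
  by_cases hu : IsUnit (c + x)
  · obtain ⟨u, hu⟩ := hu
    apply hab
    have : a * b = a * b * x * ↑u⁻¹ := by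
      rw [← key, ← hu, mul_assoc, Units.mul_inv, mul_one]
    rw [this]
    exact I.mul_mem_right _ (I.mul_mem_left _ hx)
  · have hmem : a * b * (c + x) ∈ I := key ▸ I.mul_mem_left _ hx
    have hne' : a * b * (c + x) ≠ 0 := key ▸ hne
    rcases h.2 a b (c + x) ha hb hu hmem hne' with h1 | h2
    · exact hab h1
    · apply hcr
      have : c = (c + x) - x := by ring
      rw [this]
      exact Ideal.sub_mem _ h2 (Ideal.le_radical hx)
end

section
/- Let I be a weakly 1-absorbing primary ideal of a commutative ring R and (a, b, c) a 1-triple-zero of I with a ∉ (I : c) and b ∉ (I : c). Then I³ = 0. -/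
open Ideal

theorem stmt11 {R : Type*} [CommRing R] [Nontrivial R] (I : Ideal R)
    (h : IsWeakly1AbsorbingPrimary I) (a b c : R)
    (ha : ¬IsUnit a) (hb : ¬IsUnit b) (hc : ¬IsUnit c)
    (habc : a * b * c = 0) (hab : a * b ∉ I) (hcr : c ∉ I.radical)
    (hac : a * c ∉ I) (hbc : b * c ∉ I) :
    I ^ 3 = ⊥ := by
  obtain ⟨hItop, H⟩ := h
  -- helper: cancel a unit factor in membership
  have unitcase : ∀ u t : R, IsUnit u → u * t ∈ I → t ∈ I := by
    intro u t hu hm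
    obtain ⟨v, hv⟩ := hu.exists_left_inv
    have := I.mul_mem_left v hm
    rwa [← mul_assoc, hv, one_mul] at this
  have hrad : ∀ z ∈ I, ∀ w : R, w + z ∈ I.radical → w ∈ I.radical := by
    intro z hz w hw
    have := I.radical.sub_mem hw (I.le_radical hz)
    simpa using this
  -- abI = 0
  have h1 : ∀ x ∈ I, a * b * x = 0 := by
    intro x hx
    by_contra hne
    have heq : a * b * (c + x) = a * b * x := by linear_combination habc
    have hmem : a * b * (c + x) ∈ I := by rw [heq]; exact I.mul_mem_left _ hx
    by_cases hu : IsUnit (c + x)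
    · exact hab (unitcase _ _ hu (by rwa [mul_comm] at hmem))
    · rcases H a b (c + x) ha hb hu hmem (by rwa [heq]) with h' | h'
      · exact hab h'
      · exact hcr (hrad x hx c h')
  -- Ibc = 0
  have h2 : ∀ x ∈ I, x * b * c = 0 := by
    intro x hx
    by_contra hne
    have heq : (a + x) * b * c = x * b * c := by linear_combination habc
    have hmem : (a + x) * b * c ∈ I := by
      rw [heq]; exact I.mul_mem_right _ (I.mul_mem_right _ hx)
    by_cases hu : IsUnit (a + x)
    · exact hbc (unitcase _ _ hu (by rwa [mul_assoc] at hmem))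
    · rcases H (a + x) b c hu hb hc hmem (by rwa [heq]) with h' | h'
      · refine hab ?_
        have : a * b = (a + x) * b - x * b := by ring
        rw [this]; exact I.sub_mem h' (I.mul_mem_right _ hx)
      · exact hcr h'
  -- aIc = 0
  have h3 : ∀ y ∈ I, a * y * c = 0 := by
    intro y hy
    by_contra hne
    have heq : a * (b + y) * c = a * y * c := by linear_combination habc
    have hmem : a * (b + y) * c ∈ I := by
      rw [heq]; exact I.mul_mem_right _ (I.mul_mem_left _ hy)
    by_cases hu : IsUnit (b + y)
    · refine hac (unitcase _ _ hu ?_)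
      have : (b + y) * (a * c) = a * (b + y) * c := by ring
      rwa [this]
    · rcases H a (b + y) c ha hu hc hmem (by rwa [heq]) with h' | h'
      · refine hab ?_
        have : a * b = a * (b + y) - a * y := by ring
        rw [this]; exact I.sub_mem h' (I.mul_mem_left _ hy)
      · exact hcr h'
  -- aII = 0
  have h4 : ∀ y ∈ I, ∀ z ∈ I, a * y * z = 0 := by
    intro y hy z hz
    by_contra hne
    have heq : a * (b + y) * (c + z) = a * y * z := by
      linear_combination habc + h1 z hz + h3 y hy
    have hmem : a * (b + y) * (c + z) ∈ I := by
      rw [heq]; exact I.mul_mem_right _ (I.mul_mem_left _ hy)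
    by_cases hu : IsUnit (b + y)
    · have : a * (c + z) ∈ I := by
        refine unitcase _ _ hu ?_
        have e : (b + y) * (a * (c + z)) = a * (b + y) * (c + z) := by ring
        rwa [e]
      refine hac ?_
      have e : a * c = a * (c + z) - a * z := by ring
      rw [e]; exact I.sub_mem this (I.mul_mem_left _ hz)
    · by_cases hu2 : IsUnit (c + z)
      · have : a * (b + y) ∈ I := by
          refine unitcase _ _ hu2 ?_
          have e : (c + z) * (a * (b + y)) = a * (b + y) * (c + z) := by ring
          rwa [e]
        refine hab ?_
        have e : a * b = a * (b + y) - a * y := by ring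
        rw [e]; exact I.sub_mem this (I.mul_mem_left _ hy)
      · rcases H a (b + y) (c + z) ha hu hu2 hmem (by rwa [heq]) with h' | h'
        · refine hab ?_
          have e : a * b = a * (b + y) - a * y := by ring
          rw [e]; exact I.sub_mem h' (I.mul_mem_left _ hy)
        · exact hcr (hrad z hz c h')
  -- IbI = 0
  have h5 : ∀ x ∈ I, ∀ z ∈ I, x * b * z = 0 := by
    intro x hx z hz
    by_contra hne
    have heq : (a + x) * b * (c + z) = x * b * z := by
      linear_combination habc + h1 z hz + h2 x hx
    have hmem : (a + x) * b * (c + z) ∈ I := by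
      rw [heq]; exact I.mul_mem_right _ (I.mul_mem_right _ hx)
    by_cases hu : IsUnit (a + x)
    · have : b * (c + z) ∈ I := by
        refine unitcase _ _ hu ?_
        have e : (a + x) * (b * (c + z)) = (a + x) * b * (c + z) := by ring
        rwa [e]
      refine hbc ?_
      have e : b * c = b * (c + z) - b * z := by ring
      rw [e]; exact I.sub_mem this (I.mul_mem_left _ hz)
    · by_cases hu2 : IsUnit (c + z)
      · have : (a + x) * b ∈ I := by
          refine unitcase _ _ hu2 ?_
          have e : (c + z) * ((a + x) * b) = (a + x) * b * (c + z) := by ring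
          rwa [e]
        refine hab ?_
        have e : a * b = (a + x) * b - x * b := by ring
        rw [e]; exact I.sub_mem this (I.mul_mem_right _ hx)
      · rcases H (a + x) b (c + z) hu hb hu2 hmem (by rwa [heq]) with h' | h'
        · refine hab ?_
          have e : a * b = (a + x) * b - x * b := by ring
          rw [e]; exact I.sub_mem h' (I.mul_mem_right _ hx)
        · exact hcr (hrad z hz c h')
  -- IIc = 0
  have h6 : ∀ x ∈ I, ∀ y ∈ I, x * y * c = 0 := by
    intro x hx y hy
    by_contra hne
    have heq : (a + x) * (b + y) * c = x * y * c := by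
      linear_combination habc + h2 x hx + h3 y hy
    have hmem : (a + x) * (b + y) * c ∈ I := by
      rw [heq]; exact I.mul_mem_right _ (I.mul_mem_right _ hx)
    by_cases hu : IsUnit (a + x)
    · have : (b + y) * c ∈ I := by
        refine unitcase _ _ hu ?_
        rwa [← mul_assoc]
      refine hbc ?_
      have e : b * c = (b + y) * c - y * c := by ring
      rw [e]; exact I.sub_mem this (I.mul_mem_right _ hy)
    · by_cases hu2 : IsUnit (b + y)
      · have : (a + x) * c ∈ I := by
          refine unitcase _ _ hu2 ?_
          have e : (b + y) * ((a + x) * c) = (a + x) * (b + y) * c := by ring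
          rwa [e]
        refine hac ?_
        have e : a * c = (a + x) * c - x * c := by ring
        rw [e]; exact I.sub_mem this (I.mul_mem_right _ hx)
      · rcases H (a + x) (b + y) c hu hu2 hc hmem (by rwa [heq]) with h' | h'
        · refine hab ?_
          have e : a * b = (a + x) * (b + y) - a * y - x * b - x * y := by ring
          rw [e]
          exact I.sub_mem (I.sub_mem (I.sub_mem h' (I.mul_mem_left _ hy))
            (I.mul_mem_right _ hx)) (I.mul_mem_right _ hx)
        · exact hcr h'
  -- III = 0
  have h7 : ∀ x ∈ I, ∀ y ∈ I, ∀ z ∈ I, x * y * z = 0 := by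
    intro x hx y hy z hz
    by_contra hne
    have heq : (a + x) * (b + y) * (c + z) = x * y * z := by
      linear_combination habc + h1 z hz + h2 x hx + h3 y hy +
        h4 y hy z hz + h5 x hx z hz + h6 x hx y hy
    have hmem : (a + x) * (b + y) * (c + z) ∈ I := by
      rw [heq]; exact I.mul_mem_right _ (I.mul_mem_right _ hx)
    by_cases hu : IsUnit (a + x)
    · have : (b + y) * (c + z) ∈ I := by
        refine unitcase _ _ hu ?_
        rwa [← mul_assoc]
      refine hbc ?_
      have e : b * c = (b + y) * (c + z) - b * z - y * c - y * z := by ring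
      rw [e]
      exact I.sub_mem (I.sub_mem (I.sub_mem this (I.mul_mem_left _ hz))
        (I.mul_mem_right _ hy)) (I.mul_mem_right _ hy)
    · by_cases hu2 : IsUnit (b + y)
      · have : (a + x) * (c + z) ∈ I := by
          refine unitcase _ _ hu2 ?_
          have e : (b + y) * ((a + x) * (c + z)) = (a + x) * (b + y) * (c + z) := by ring
          rwa [e]
        refine hac ?_
        have e : a * c = (a + x) * (c + z) - a * z - x * c - x * z := by ring
        rw [e]
        exact I.sub_mem (I.sub_mem (I.sub_mem this (I.mul_mem_left _ hz))
          (I.mul_mem_right _ hx)) (I.mul_mem_right _ hx)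
      · by_cases hu3 : IsUnit (c + z)
        · have : (a + x) * (b + y) ∈ I := by
            refine unitcase _ _ hu3 ?_
            have e : (c + z) * ((a + x) * (b + y)) = (a + x) * (b + y) * (c + z) := by ring
            rwa [e]
          refine hab ?_
          have e : a * b = (a + x) * (b + y) - a * y - x * b - x * y := by ring
          rw [e]
          exact I.sub_mem (I.sub_mem (I.sub_mem this (I.mul_mem_left _ hy))
            (I.mul_mem_right _ hx)) (I.mul_mem_right _ hx)
        · rcases H (a + x) (b + y) (c + z) hu hu2 hu3 hmem (by rwa [heq]) with h' | h'
          · refine hab ?_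
            have e : a * b = (a + x) * (b + y) - a * y - x * b - x * y := by ring
            rw [e]
            exact I.sub_mem (I.sub_mem (I.sub_mem h' (I.mul_mem_left _ hy))
              (I.mul_mem_right _ hx)) (I.mul_mem_right _ hx)
          · exact hcr (hrad z hz c h')
  -- conclude
  have hle : I ^ 3 ≤ ⊥ := by
    rw [pow_succ, pow_two]
    refine Ideal.mul_le.2 ?_
    intro p hp z hz
    have : p * z = 0 := by
      refine Submodule.mul_induction_on hp (fun x hx y hy => ?_) (fun p q hp' hq' => ?_)
      · exact h7 x hx y hy z hz
      · rw [add_mul, hp', hq', add_zero]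
    simpa [Ideal.mem_bot] using this
  exact le_bot_iff.mp hle
end

section
/- Let R be a reduced commutative ring and I a weakly 1-absorbing primary ideal of R that admits a 1-triple-zero (a, b, c) with a ∉ (I : c) and b ∉ (I : c). Then I = 0. -/
open Ideal

private lemma mem_of_mul_isUnit' {R : Type*} [CommRing R] {I : Ideal R} {y u : R}
    (hu : IsUnit u) (hm : y * u ∈ I) : y ∈ I := by
  obtain ⟨v, hv⟩ := hu.exists_right_inv
  have : y = y * u * v := by rw [mul_assoc, hv, mul_one]
  rw [this]; exact I.mul_mem_right _ hm

private lemma sub_helper' {R : Type*} [CommRing R] {I : Ideal R} {p q r : R}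
    (hp : p ∈ I) (hq : q ∈ I) (e : r = p - q) : r ∈ I := by
  rw [e]; exact Ideal.sub_mem _ hp hq

theorem stmt12 {R : Type*} [CommRing R] [Nontrivial R] [IsReduced R] (I : Ideal R)
    (h : IsWeakly1AbsorbingPrimary I) (a b c : R)
    (ha : ¬IsUnit a) (hb : ¬IsUnit b) (hc : ¬IsUnit c)
    (habc : a * b * c = 0) (hab : a * b ∉ I) (hcr : c ∉ I.radical)
    (hac : a * c ∉ I) (hbc : b * c ∉ I) :
    I = ⊥ := by
  have hcrad : ∀ z : R, z ∈ I → c + z ∉ I.radical := by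
    intro z hz hmem
    exact hcr (by simpa using Ideal.sub_mem _ hmem (I.le_radical hz))
  ext x
  simp only [Ideal.mem_bot]
  constructor
  · intro hx
    -- Step 1 : a*b*x = 0
    have h1 : a * b * x = 0 := by
      by_contra h1
      have e : a * b * (c + x) = a * b * x := by linear_combination habc
      have emem : a * b * (c + x) ∈ I := by rw [e]; exact I.mul_mem_left _ hx
      by_cases hu : IsUnit (c + x)
      · exact hab (mem_of_mul_isUnit' hu emem)
      · rcases h.2 a b (c + x) ha hb hu emem (by rw [e]; exact h1) with h' | h'
        · exact hab h'
        · exact hcrad x hx h'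
    -- Step 2 : a*c*x = 0
    have h2 : a * c * x = 0 := by
      by_contra h2
      have e : a * (b + x) * c = a * c * x := by linear_combination habc
      have emem : a * (b + x) * c ∈ I := by rw [e]; exact I.mul_mem_left _ hx
      by_cases hu : IsUnit (b + x)
      · exact hac (mem_of_mul_isUnit' hu (by rwa [show a * (b + x) * c = a * c * (b + x) by ring] at emem))
      · rcases h.2 a (b + x) c ha hu hc emem (by rw [e]; exact h2) with h' | h'
        · exact hab (sub_helper' h' (I.mul_mem_left a hx) (by ring))
        · exact hcr h'
    -- Step 3 : b*c*x = 0
    have h3 : b * c * x = 0 := by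
      by_contra h3
      have e : (a + x) * b * c = b * c * x := by linear_combination habc
      have emem : (a + x) * b * c ∈ I := by rw [e]; exact I.mul_mem_left _ hx
      by_cases hu : IsUnit (a + x)
      · exact hbc (mem_of_mul_isUnit' hu (by rwa [show (a + x) * b * c = b * c * (a + x) by ring] at emem))
      · rcases h.2 (a + x) b c hu hb hc emem (by rw [e]; exact h3) with h' | h'
        · exact hab (sub_helper' h' (I.mul_mem_left b hx) (by ring))
        · exact hcr h'
    -- Step 4 : a*x*x = 0
    have h4 : a * x * x = 0 := by
      by_contra h4
      have e : a * (b + x) * (c + x) = a * x * x := by linear_combination habc + h1 + h2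
      have emem : a * (b + x) * (c + x) ∈ I := by
        rw [e]; exact I.mul_mem_left _ hx
      by_cases hu1 : IsUnit (b + x)
      · have : a * (c + x) ∈ I :=
          mem_of_mul_isUnit' hu1 (by rwa [show a * (b + x) * (c + x) = a * (c + x) * (b + x) by ring] at emem)
        exact hac (sub_helper' this (I.mul_mem_left a hx) (by ring))
      by_cases hu2 : IsUnit (c + x)
      · have : a * (b + x) ∈ I := mem_of_mul_isUnit' hu2 emem
        exact hab (sub_helper' this (I.mul_mem_left a hx) (by ring))
      rcases h.2 a (b + x) (c + x) ha hu1 hu2 emem (by rw [e]; exact h4) with h' | h'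
      · exact hab (sub_helper' h' (I.mul_mem_left a hx) (by ring))
      · exact hcrad x hx h'
    -- Step 5 : b*x*x = 0
    have h5 : b * x * x = 0 := by
      by_contra h5
      have e : (a + x) * b * (c + x) = b * x * x := by linear_combination habc + h1 + h3
      have emem : (a + x) * b * (c + x) ∈ I := by rw [e]; exact I.mul_mem_left _ hx
      by_cases hu1 : IsUnit (a + x)
      · have : b * (c + x) ∈ I :=
          mem_of_mul_isUnit' hu1 (by rwa [show (a + x) * b * (c + x) = b * (c + x) * (a + x) by ring] at emem)
        exact hbc (sub_helper' this (I.mul_mem_left b hx) (by ring))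
      by_cases hu2 : IsUnit (c + x)
      · have : (a + x) * b ∈ I := mem_of_mul_isUnit' hu2 emem
        exact hab (sub_helper' this (I.mul_mem_left b hx) (by ring))
      rcases h.2 (a + x) b (c + x) hu1 hb hu2 emem (by rw [e]; exact h5) with h' | h'
      · exact hab (sub_helper' h' (I.mul_mem_left b hx) (by ring))
      · exact hcrad x hx h'
    -- Step 6 : c*x*x = 0
    have h6 : c * x * x = 0 := by
      by_contra h6
      have e : (a + x) * (b + x) * c = c * x * x := by linear_combination habc + h2 + h3
      have emem : (a + x) * (b + x) * c ∈ I := by rw [e]; exact I.mul_mem_left _ hx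
      by_cases hu1 : IsUnit (a + x)
      · have : (b + x) * c ∈ I :=
          mem_of_mul_isUnit' hu1 (by rwa [show (a + x) * (b + x) * c = (b + x) * c * (a + x) by ring] at emem)
        exact hbc (sub_helper' this (I.mul_mem_left c hx) (by ring))
      by_cases hu2 : IsUnit (b + x)
      · have : (a + x) * c ∈ I :=
          mem_of_mul_isUnit' hu2 (by rwa [show (a + x) * (b + x) * c = (a + x) * c * (b + x) by ring] at emem)
        exact hac (sub_helper' this (I.mul_mem_left c hx) (by ring))
      rcases h.2 (a + x) (b + x) c hu1 hu2 hc emem (by rw [e]; exact h6) with h' | h'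
      · have hab' : a * b ∈ I := by
          have e2 : a * b = (a + x) * (b + x) - (a * x + b * x + x * x) := by ring
          rw [e2]
          exact Ideal.sub_mem _ h'
            (I.add_mem (I.add_mem (I.mul_mem_left a hx) (I.mul_mem_left b hx)) (I.mul_mem_left x hx))
        exact hab hab'
      · exact hcr h'
    -- Step 7 : x*x*x = 0
    have h7 : x * x * x = 0 := by
      by_contra h7
      have e : (a + x) * (b + x) * (c + x) = x * x * x := by
        linear_combination habc + h1 + h2 + h3 + h4 + h5 + h6
      have emem : (a + x) * (b + x) * (c + x) ∈ I := by rw [e]; exact I.mul_mem_left _ hx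
      by_cases hu1 : IsUnit (a + x)
      · have : (b + x) * (c + x) ∈ I :=
          mem_of_mul_isUnit' hu1
            (by rwa [show (a + x) * (b + x) * (c + x) = (b + x) * (c + x) * (a + x) by ring] at emem)
        have : b * c ∈ I := by
          have e2 : b * c = (b + x) * (c + x) - (b * x + c * x + x * x) := by ring
          rw [e2]
          exact Ideal.sub_mem _ this
            (I.add_mem (I.add_mem (I.mul_mem_left b hx) (I.mul_mem_left c hx)) (I.mul_mem_left x hx))
        exact hbc this
      by_cases hu2 : IsUnit (b + x)
      · have : (a + x) * (c + x) ∈ I :=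
          mem_of_mul_isUnit' hu2
            (by rwa [show (a + x) * (b + x) * (c + x) = (a + x) * (c + x) * (b + x) by ring] at emem)
        have : a * c ∈ I := by
          have e2 : a * c = (a + x) * (c + x) - (a * x + c * x + x * x) := by ring
          rw [e2]
          exact Ideal.sub_mem _ this
            (I.add_mem (I.add_mem (I.mul_mem_left a hx) (I.mul_mem_left c hx)) (I.mul_mem_left x hx))
        exact hac this
      by_cases hu3 : IsUnit (c + x)
      · have hmem : (a + x) * (b + x) ∈ I := mem_of_mul_isUnit' hu3 emem
        have : a * b ∈ I := by
          have e2 : a * b = (a + x) * (b + x) - (a * x + b * x + x * x) := by ring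
          rw [e2]
          exact Ideal.sub_mem _ hmem
            (I.add_mem (I.add_mem (I.mul_mem_left a hx) (I.mul_mem_left b hx)) (I.mul_mem_left x hx))
        exact hab this
      rcases h.2 (a + x) (b + x) (c + x) hu1 hu2 hu3 emem (by rw [e]; exact h7) with h' | h'
      · have : a * b ∈ I := by
          have e2 : a * b = (a + x) * (b + x) - (a * x + b * x + x * x) := by ring
          rw [e2]
          exact Ideal.sub_mem _ h'
            (I.add_mem (I.add_mem (I.mul_mem_left a hx) (I.mul_mem_left b hx)) (I.mul_mem_left x hx))
        exact hab this
      · exact hcrad x hx h'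
    have : IsNilpotent x := ⟨3, by rw [pow_succ, pow_two]; ring_nf; ring_nf at h7; exact h7⟩
    exact this.eq_zero
  · rintro rfl
    exact I.zero_mem
end

section
/- Let R₁ and R₂ be commutative rings with 1 ≠ 0 that are not fields, R = R₁ × R₂, and I a nonzero proper ideal of R. If I is a weakly 1-absorbing primary ideal of R, then I = I₁ × R₂ for some primary ideal I₁ of R₁, or I = R₁ × I₂ for some primary ideal I₂ of R₂. -/
open Ideal

theorem stmt16 {R₁ R₂ : Type*} [CommRing R₁] [CommRing R₂] [Nontrivial R₁] [Nontrivial R₂]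
    (hf1 : ¬IsField R₁) (hf2 : ¬IsField R₂)
    (I : Ideal (R₁ × R₂)) (hne : I ≠ ⊥) (hI : I ≠ ⊤)
    (h : IsWeakly1AbsorbingPrimary I) :
    (∃ I₁ : Ideal R₁, I₁.IsPrimary ∧ I = Ideal.prod I₁ ⊤) ∨
    (∃ I₂ : Ideal R₂, I₂.IsPrimary ∧ I = Ideal.prod ⊤ I₂) := by
  obtain ⟨u₁, hu₁0, hu₁⟩ := Ring.exists_not_isUnit_of_not_isField hf1
  obtain ⟨u₂, hu₂0, hu₂⟩ := Ring.exists_not_isUnit_of_not_isField hf2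
  obtain ⟨hItop, habs⟩ := h
  set I₁ := Ideal.map (RingHom.fst R₁ R₂) I with hI₁def
  set I₂ := Ideal.map (RingHom.snd R₁ R₂) I with hI₂def
  have hprod : I = Ideal.prod I₁ I₂ := Ideal.ideal_prod_eq I
  have hmem : ∀ p : R₁ × R₂, p ∈ I ↔ p.1 ∈ I₁ ∧ p.2 ∈ I₂ := by
    rintro ⟨r, s⟩
    rw [hprod]
    exact Ideal.mem_prod _ _
  have hnu10 : ¬IsUnit ((1, 0) : R₁ × R₂) := fun hu => by
    have := hu.map (RingHom.snd R₁ R₂)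
    simp at this
  have hnu01 : ¬IsUnit ((0, 1) : R₁ × R₂) := fun hu => by
    have := hu.map (RingHom.fst R₁ R₂)
    simp at this
  -- Step 1 : one of the components is ⊤
  have key : I₁ = ⊤ ∨ I₂ = ⊤ := by
    obtain ⟨⟨a, b⟩, hp, hp0⟩ := Submodule.exists_mem_ne_zero_of_ne_bot hne
    have hab : a ≠ 0 ∨ b ≠ 0 := by
      by_contra hc
      push_neg at hc
      exact hp0 (by simp [Prod.ext_iff, hc.1, hc.2])
    rcases hab with ha | hb
    · by_cases hau : IsUnit a
      · left
        exact Ideal.eq_top_of_isUnit_mem I₁ (Ideal.mem_map_of_mem _ hp) hau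
      · have hnua1 : ¬IsUnit ((a, 1) : R₁ × R₂) := fun hu =>
          hau (hu.map (RingHom.fst R₁ R₂))
        have he : ((1, 0) : R₁ × R₂) * (1, 0) * (a, 1) = (a, 0) := by simp
        have hmemI : ((1, 0) : R₁ × R₂) * (1, 0) * (a, 1) ∈ I := by
          rw [he]
          simpa using I.mul_mem_left (1, 0) hp
        have hnz : ((1, 0) : R₁ × R₂) * (1, 0) * (a, 1) ≠ 0 := by
          rw [he]
          exact fun h0 => ha (congrArg Prod.fst h0)
        rcases habs _ _ _ hnu10 hnu10 hnua1 hmemI hnz with h1 | h2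
        · left
          have : ((1, 0) : R₁ × R₂) ∈ I := by simpa using h1
          exact Ideal.eq_top_iff_one I₁ |>.mpr ((hmem _).mp this).1
        · right
          obtain ⟨n, hn⟩ := h2
          have : ((a, 1) : R₁ × R₂) ^ n = (a ^ n, 1) := by simp [Prod.pow_mk]
          rw [this] at hn
          exact Ideal.eq_top_iff_one I₂ |>.mpr ((hmem _).mp hn).2
    · by_cases hbu : IsUnit b
      · right
        exact Ideal.eq_top_of_isUnit_mem I₂ (Ideal.mem_map_of_mem _ hp) hbu
      · have hnub1 : ¬IsUnit ((1, b) : R₁ × R₂) := fun hu =>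
          hbu (hu.map (RingHom.snd R₁ R₂))
        have he : ((0, 1) : R₁ × R₂) * (0, 1) * (1, b) = (0, b) := by simp
        have hmemI : ((0, 1) : R₁ × R₂) * (0, 1) * (1, b) ∈ I := by
          rw [he]
          simpa using I.mul_mem_left (0, 1) hp
        have hnz : ((0, 1) : R₁ × R₂) * (0, 1) * (1, b) ≠ 0 := by
          rw [he]
          exact fun h0 => hb (congrArg Prod.snd h0)
        rcases habs _ _ _ hnu01 hnu01 hnub1 hmemI hnz with h1 | h2
        · right
          have : ((0, 1) : R₁ × R₂) ∈ I := by simpa using h1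
          exact Ideal.eq_top_iff_one I₂ |>.mpr ((hmem _).mp this).2
        · left
          obtain ⟨n, hn⟩ := h2
          have : ((1, b) : R₁ × R₂) ^ n = (1, b ^ n) := by simp [Prod.pow_mk]
          rw [this] at hn
          exact Ideal.eq_top_iff_one I₁ |>.mpr ((hmem _).mp hn).1
  rcases key with h1top | h2top
  · -- I = ⊤ × I₂, show I₂ primary
    right
    refine ⟨I₂, ?_, by rw [hprod, h1top]⟩
    rw [Ideal.isPrimary_iff]
    constructor
    · intro h2t
      exact hItop (by rw [hprod, h1top, h2t, Ideal.prod_top_top])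
    · intro x y hxy
      by_cases hxu : IsUnit x
      · right
        apply Ideal.le_radical
        have := I₂.mul_mem_left ↑hxu.unit⁻¹ hxy
        rwa [← mul_assoc, IsUnit.val_inv_mul, one_mul] at this
      by_cases hyu : IsUnit y
      · left
        have := I₂.mul_mem_left ↑hyu.unit⁻¹ hxy
        rwa [mul_comm x y, ← mul_assoc, IsUnit.val_inv_mul, one_mul] at this
      have hnux : ¬IsUnit ((1, x) : R₁ × R₂) := fun hu => hxu (hu.map (RingHom.snd R₁ R₂))
      have hnuy : ¬IsUnit ((1, y) : R₁ × R₂) := fun hu => hyu (hu.map (RingHom.snd R₁ R₂))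
      have hnuu : ¬IsUnit ((u₁, 1) : R₁ × R₂) := fun hu => hu₁ (hu.map (RingHom.fst R₁ R₂))
      have he : ((1, x) : R₁ × R₂) * (u₁, 1) * (1, y) = (u₁, x * y) := by simp
      have hmemI : ((1, x) : R₁ × R₂) * (u₁, 1) * (1, y) ∈ I := by
        rw [he, hmem]
        exact ⟨by simp [h1top], hxy⟩
      have hnz : ((1, x) : R₁ × R₂) * (u₁, 1) * (1, y) ≠ 0 := by
        rw [he]
        exact fun h0 => hu₁0 (congrArg Prod.fst h0)
      rcases habs _ _ _ hnux hnuu hnuy hmemI hnz with hc | hc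
      · left
        have : ((u₁, x) : R₁ × R₂) ∈ I := by simpa using hc
        exact ((hmem _).mp this).2
      · right
        obtain ⟨n, hn⟩ := hc
        have hpow : ((1, y) : R₁ × R₂) ^ n = (1, y ^ n) := by simp [Prod.pow_mk]
        rw [hpow] at hn
        exact ⟨n, ((hmem _).mp hn).2⟩
  · -- I = I₁ × ⊤, show I₁ primary
    left
    refine ⟨I₁, ?_, by rw [hprod, h2top]⟩
    rw [Ideal.isPrimary_iff]
    constructor
    · intro h1t
      exact hItop (by rw [hprod, h1t, h2top, Ideal.prod_top_top])
    · intro x y hxy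
      by_cases hxu : IsUnit x
      · right
        apply Ideal.le_radical
        have := I₁.mul_mem_left ↑hxu.unit⁻¹ hxy
        rwa [← mul_assoc, IsUnit.val_inv_mul, one_mul] at this
      by_cases hyu : IsUnit y
      · left
        have := I₁.mul_mem_left ↑hyu.unit⁻¹ hxy
        rwa [mul_comm x y, ← mul_assoc, IsUnit.val_inv_mul, one_mul] at this
      have hnux : ¬IsUnit ((x, 1) : R₁ × R₂) := fun hu => hxu (hu.map (RingHom.fst R₁ R₂))
      have hnuy : ¬IsUnit ((y, 1) : R₁ × R₂) := fun hu => hyu (hu.map (RingHom.fst R₁ R₂))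
      have hnuu : ¬IsUnit ((1, u₂) : R₁ × R₂) := fun hu => hu₂ (hu.map (RingHom.snd R₁ R₂))
      have he : ((x, 1) : R₁ × R₂) * (1, u₂) * (y, 1) = (x * y, u₂) := by simp
      have hmemI : ((x, 1) : R₁ × R₂) * (1, u₂) * (y, 1) ∈ I := by
        rw [he, hmem]
        exact ⟨hxy, by simp [h2top]⟩
      have hnz : ((x, 1) : R₁ × R₂) * (1, u₂) * (y, 1) ≠ 0 := by
        rw [he]
        exact fun h0 => hu₂0 (congrArg Prod.snd h0)
      rcases habs _ _ _ hnux hnuu hnuy hmemI hnz with hc | hc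
      · left
        have : ((x, u₂) : R₁ × R₂) ∈ I := by simpa using hc
        exact ((hmem _).mp this).1
      · right
        obtain ⟨n, hn⟩ := hc
        have hpow : ((y, 1) : R₁ × R₂) ^ n = (y ^ n, 1) := by simp [Prod.pow_mk]
        rw [hpow] at hn
        exact ⟨n, ((hmem _).mp hn).1⟩
end

section
/- Let R₁, R₂, R₃ be commutative rings with 1 ≠ 0 and R = R₁ × R₂ × R₃. Then not every proper ideal of R is a weakly 1-absorbing primary ideal of R; specifically, R₁ × {0} × {0} is not weakly 1-absorbing primary whenever R₁ is nontrivial. -/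
open Ideal

theorem stmt17 {R₁ R₂ R₃ : Type*} [CommRing R₁] [CommRing R₂] [CommRing R₃]
    [Nontrivial R₁] [Nontrivial R₂] [Nontrivial R₃] :
    ¬ IsWeakly1AbsorbingPrimary
      (Ideal.prod (⊤ : Ideal R₁) (⊥ : Ideal (R₂ × R₃))) := by
  rintro ⟨-, h⟩
  -- R₂ component ring hom
  set f : R₁ × R₂ × R₃ →+* R₂ := (RingHom.fst R₂ R₃).comp (RingHom.snd R₁ (R₂ × R₃)) with hf
  set g : R₁ × R₂ × R₃ →+* R₃ := (RingHom.snd R₂ R₃).comp (RingHom.snd R₁ (R₂ × R₃)) with hg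
  have ha : ¬ IsUnit ((1, (0, 1)) : R₁ × R₂ × R₃) := fun hu => by
    have h0 : IsUnit (0 : R₂) := by simpa [hf] using hu.map f
    exact not_isUnit_zero h0
  have hc : ¬ IsUnit ((1, (1, 0)) : R₁ × R₂ × R₃) := fun hu => by
    have h0 : IsUnit (0 : R₃) := by simpa [hg] using hu.map g
    exact not_isUnit_zero h0
  have key := h (1, (0, 1)) (1, (0, 1)) (1, (1, 0)) ha ha hc ?_ ?_
  · rcases key with hmem | hmem
    · rw [Ideal.mem_prod] at hmem
      have : ((0, 1) : R₂ × R₃) ∈ (⊥ : Ideal (R₂ × R₃)) := by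
        simpa [Prod.mul_def] using hmem.2
      simp [Prod.ext_iff] at this
    · rw [Ideal.mem_radical_iff] at hmem
      obtain ⟨n, hn⟩ := hmem
      rw [Ideal.mem_prod] at hn
      have h2 : (((1, (1, 0)) : R₁ × R₂ × R₃) ^ n).2 = 0 := by
        simpa using hn.2
      have h3 := congrArg Prod.fst h2
      simp at h3
  · rw [Ideal.mem_prod]
    constructor
    · exact Submodule.mem_top
    · simp [Prod.mul_def]
  · intro h0
    rw [Prod.ext_iff] at h0
    simpa using h0.1
end

section
/- Let f : R₁ → R₂ be a surjective ring homomorphism of commutative rings and I a weakly 1-absorbing primary ideal of R₁ with ker(f) ⊆ I. Then f(I) is a weakly 1-absorbing primary ideal of R₂. -/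
open Ideal

theorem stmt18 {R₁ R₂ : Type*} [CommRing R₁] [CommRing R₂] [Nontrivial R₁] [Nontrivial R₂]
    (f : R₁ →+* R₂) (hf : Function.Surjective f)
    (I : Ideal R₁) (h : IsWeakly1AbsorbingPrimary I)
    (hker : RingHom.ker f ≤ I) :
    IsWeakly1AbsorbingPrimary (I.map f) := by
  obtain ⟨hI, hmain⟩ := h
  have hcomap : Ideal.comap f (Ideal.map f I) = I := by
    rw [Ideal.comap_map_of_surjective f hf]
    exact sup_eq_left.mpr hker
  constructor
  · intro htop
    apply hI
    rw [← hcomap, htop, Ideal.comap_top]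
  · intro a b c ha hb hc habc hne
    obtain ⟨a', rfl⟩ := hf a
    obtain ⟨b', rfl⟩ := hf b
    obtain ⟨c', rfl⟩ := hf c
    have ha' : ¬IsUnit a' := fun hu => ha (hu.map f)
    have hb' : ¬IsUnit b' := fun hu => hb (hu.map f)
    have hc' : ¬IsUnit c' := fun hu => hc (hu.map f)
    have hmem : a' * b' * c' ∈ I := by
      rw [← hcomap]; simpa using habc
    have hne' : a' * b' * c' ≠ 0 := by
      intro h0
      apply hne
      rw [← _root_.map_mul, ← _root_.map_mul, h0, map_zero]
    rcases hmain a' b' c' ha' hb' hc' hmem hne' with hab | hc''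
    · left
      rw [← _root_.map_mul]
      exact Ideal.mem_map_of_mem f hab
    · right
      obtain ⟨n, hn⟩ := hc''
      exact ⟨n, by rw [← _root_.map_pow]; exact Ideal.mem_map_of_mem f hn⟩
end

section
/- Let S be a multiplicatively closed subset of a commutative ring R and I a weakly 1-absorbing primary ideal of R with I ∩ S = ∅. Then the localization S⁻¹I is a weakly 1-absorbing primary ideal of S⁻¹R. -/
open Ideal

theorem stmt19 {R : Type*} [CommRing R] [Nontrivial R] (S : Submonoid R)
    (I : Ideal R) (h : IsWeakly1AbsorbingPrimary I)
    (hdisj : ∀ s ∈ S, s ∉ I) :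
    IsWeakly1AbsorbingPrimary (I.map (algebraMap R (Localization S))) := by
  set L := Localization S
  have hunit : ∀ (x : R) (s : S), ¬ IsUnit (IsLocalization.mk' L x s) → ¬ IsUnit x := by
    intro x s hx hu
    apply hx
    have : IsLocalization.mk' L x s * algebraMap R L s = algebraMap R L x :=
      IsLocalization.mk'_spec L x s
    have hxu : IsUnit (algebraMap R L x) := hu.map _
    have hsu : IsUnit (algebraMap R L (s : R)) := IsLocalization.map_units L s
    exact isUnit_of_mul_isUnit_left (this ▸ hxu : IsUnit (IsLocalization.mk' L x s * _))
  constructor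
  · intro htop
    have h1 : (1 : L) ∈ I.map (algebraMap R L) := htop ▸ Submodule.mem_top
    rw [IsLocalization.mem_map_algebraMap_iff S] at h1
    obtain ⟨⟨a, s⟩, hs⟩ := h1
    rw [one_mul] at hs
    obtain ⟨c, hc⟩ := (IsLocalization.eq_iff_exists S L).mp hs
    have hmem : (c : R) * (s : R) ∈ I := hc ▸ I.mul_mem_left c a.2
    exact hdisj _ (S.mul_mem c.2 s.2) hmem
  · intro x y z hx hy hz hmem hne
    obtain ⟨⟨a, s⟩, rfl⟩ := IsLocalization.mk'_surjective S x
    obtain ⟨⟨b, t⟩, rfl⟩ := IsLocalization.mk'_surjective S y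
    obtain ⟨⟨c, u⟩, rfl⟩ := IsLocalization.mk'_surjective S z
    dsimp only at hx hy hz hmem hne
    rw [← IsLocalization.mk'_mul, ← IsLocalization.mk'_mul] at hmem hne
    rw [IsLocalization.mk'_mem_map_algebraMap_iff S] at hmem
    obtain ⟨v, hv, hvI⟩ := hmem
    have hne' : v * a * b * c ≠ 0 := by
      intro h0
      apply hne
      rw [IsLocalization.mk'_eq_zero_iff]
      exact ⟨⟨v, hv⟩, by rw [← h0]; ring⟩
    have hva : ¬ IsUnit (v * a) := fun hu => hunit a s hx (isUnit_of_mul_isUnit_right hu)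
    have hmemI : v * a * b * c ∈ I := by
      have : v * (a * b * c) = v * a * b * c := by ring
      exact this ▸ hvI
    rcases h.2 (v * a) b c hva (hunit b t hy) (hunit c u hz) hmemI hne' with hab | hc
    · left
      rw [← IsLocalization.mk'_mul, IsLocalization.mk'_mem_map_algebraMap_iff S]
      exact ⟨v, hv, by rwa [← mul_assoc]⟩
    · right
      obtain ⟨n, hn⟩ := hc
      refine ⟨n, ?_⟩
      rw [← IsLocalization.mk'_pow, IsLocalization.mk'_mem_map_algebraMap_iff S]
      exact ⟨1, S.one_mem, by simpa using I.mul_mem_left 1 hn⟩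
end
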